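/- Let μ > 0 and λ ∈ [−1,0), and set b(τ) := μ(1+τ)^{−λ}. There exist constants c0 > 0, C > 0, K > 0 and T0 ≥ 0, depending only on μ and λ, with the following property: for every r with 0 ≤ r ≤ c0, every pair of times T0 ≤ s ≤ t, and every twice differentiable function y : ℝ → ℝ satisfying y″(τ) + r²·y(τ) + b(τ)·y′(τ) + b′(τ)·y(τ) = 0 for all τ ∈ [s,t] with initial data y(s) = 1 and y′(s) = 0, one has |y(t)| ≤ K·(b(s)/b(t))·exp( −C·r²·∫_s^t b(τ)^{−1} dτ ). -/

import Mathlib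

open Set Filter MeasureTheory Real Topology

set_option maxHeartbeats 1200000 in
theorem Phi1u_low_frequency_upper_bound
    (μ lam : ℝ) (hμ : 0 < μ) (hlam : lam ∈ Set.Ico (-1:ℝ) 0) :
    ∃ c0 > (0:ℝ), ∃ C > (0:ℝ), ∃ K > (0:ℝ), ∃ T0 ≥ (0:ℝ),
      ∀ r : ℝ, 0 ≤ r → r ≤ c0 → ∀ s t : ℝ, T0 ≤ s → s ≤ t →
        ∀ y : ℝ → ℝ,
          (∀ τ : ℝ, DifferentiableAt ℝ y τ) →
          (∀ τ : ℝ, DifferentiableAt ℝ (deriv y) τ) →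
          (∀ τ ∈ Set.Icc s t,
            deriv (deriv y) τ + r^2 * y τ + (μ * (1+τ)^(-lam)) * deriv y τ
              + (-lam * μ * (1+τ)^(-lam-1)) * y τ = 0) →
          y s = 1 → deriv y s = 0 →
          |y t| ≤ K * ((μ * (1+s)^(-lam)) / (μ * (1+t)^(-lam))) *
            Real.exp (-C * r^2 * ∫ τ in s..t, (μ * (1+τ)^(-lam))⁻¹) := by
  obtain ⟨hlam1, hlam0⟩ := hlam
  have hT0 : (0:ℝ) < 8/μ := by positivity
  refine ⟨μ/4, by positivity, 1, one_pos, 2, by norm_num, 8/μ, hT0.le, ?_⟩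
  intro r hr0 hrc s t hsT hst y hy1 hy2 hode hys hdys
  have hs0 : 0 ≤ s := le_trans hT0.le hsT
  set b : ℝ → ℝ := fun τ => μ * (1+τ)^(-lam) with hbdef
  have hlampos : 0 < -lam := by linarith
  have hbase : ∀ τ : ℝ, s ≤ τ → 0 < 1 + τ := fun τ h => by linarith
  have hbge : ∀ τ, s ≤ τ → μ ≤ b τ := by
    intro τ h
    have h1 : (1:ℝ) ≤ 1 + τ := by linarith
    have h2 := Real.one_le_rpow h1 hlampos.le
    simp only [hbdef]
    nlinarith
  have hbpos : ∀ τ, s ≤ τ → 0 < b τ := fun τ h => lt_of_lt_of_le hμ (hbge τ h)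
  -- continuity of b
  have hbc : Continuous b := by
    apply continuous_const.mul
    rw [continuous_iff_continuousAt]
    intro x
    exact (Real.continuousAt_rpow_const _ _ (Or.inr hlampos.le)).comp
      (continuousAt_const.add continuousAt_id)
  -- derivative of b
  have hb' : ∀ τ, s ≤ τ → HasDerivAt b (-lam * μ * (1+τ)^(-lam-1)) τ := by
    intro τ h
    have h1 : (1:ℝ) + τ ≠ 0 := ne_of_gt (hbase τ h)
    have h2 : HasDerivAt (fun x : ℝ => 1 + x) 1 τ := (hasDerivAt_id τ).const_add 1
    have h3 : HasDerivAt (fun x : ℝ => (1+x)^(-lam)) (1 * (-lam) * (1+τ)^(-lam-1)) τ :=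
      HasDerivAt.rpow_const h2 (Or.inl h1)
    have h4 := h3.const_mul μ
    refine h4.congr_deriv ?_
    ring
  -- bound on b'
  have hb'le : ∀ τ, s ≤ τ → -lam * μ * (1+τ)^(-lam-1) ≤ b τ * b τ / 8 := by
    intro τ h
    have h1 : 0 < 1 + τ := hbase τ h
    have h2 : (1+τ)^(-lam-1) = (1+τ)^(-lam) * (1+τ)⁻¹ := by
      rw [show -lam-1 = -lam + (-1) by ring, Real.rpow_add h1, Real.rpow_neg_one]
    have h3 : (1+τ)⁻¹ ≤ μ/8 := by
      rw [inv_le_comm₀ h1 (by positivity)]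
      have : 8/μ ≤ τ := le_trans hsT h
      calc (μ/8)⁻¹ = 8/μ := by field_simp
      _ ≤ 1 + τ := by linarith
    have h4 : 0 < (1+τ)^(-lam) := Real.rpow_pos_of_pos h1 _
    have h5 : -lam ≤ 1 := by linarith
    have hb := hbge τ h
    simp only [hbdef] at *
    rw [h2]
    have h6 : 0 < (1+τ)⁻¹ := by positivity
    nlinarith [mul_pos (mul_pos hμ h4) h6]
  have hb'pos : ∀ τ, s ≤ τ → 0 < -lam * μ * (1+τ)^(-lam-1) := by
    intro τ h
    have h1 : 0 < 1 + τ := hbase τ h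
    have := Real.rpow_pos_of_pos h1 (-lam-1)
    positivity
  -- z and u
  set u : ℝ → ℝ := fun τ => -deriv y τ with hudef
  set z : ℝ → ℝ := fun τ => deriv y τ + b τ * y τ with hzdef
  have hyc : Continuous y := continuous_iff_continuousAt.2 fun τ => (hy1 τ).continuousAt
  have hy'c : Continuous (deriv y) := continuous_iff_continuousAt.2 fun τ => (hy2 τ).continuousAt
  have huc : Continuous u := hy'c.neg
  have hzc : Continuous z := hy'c.add (hbc.mul hyc)
  have hzu : ∀ τ, z τ = b τ * y τ - u τ := by intro τ; simp [hzdef, hudef]; ring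
  have hzs : z s = b s := by simp [hzdef, hdys, hys]
  have hu' : ∀ τ, τ ∈ Icc s t →
      HasDerivAt u (r^2 * y τ + b τ * deriv y τ + (-lam * μ * (1+τ)^(-lam-1)) * y τ) τ := by
    intro τ hτ
    have h1 : HasDerivAt (deriv y) (deriv (deriv y) τ) τ := (hy2 τ).hasDerivAt
    have h2 := h1.neg
    refine h2.congr_deriv ?_
    have h3 := hode τ hτ
    simp only [hbdef]
    linarith
  have hz' : ∀ τ, τ ∈ Icc s t → HasDerivAt z (-(r^2) * y τ) τ := by
    intro τ hτ
    have h1 : HasDerivAt (deriv y) (deriv (deriv y) τ) τ := (hy2 τ).hasDerivAt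
    have h2 := (hb' τ hτ.1).mul ((hy1 τ).hasDerivAt)
    have h3 := h1.add h2
    refine h3.congr_deriv ?_
    have h4 := hode τ hτ
    simp only [hbdef]
    linarith
  -- positivity of z while region holds
  have key_zpos : ∀ τ₁, τ₁ ∈ Icc s t →
      (∀ σ ∈ Icc s τ₁, 0 ≤ u σ ∧ 2 * u σ ≤ b σ * y σ) → 0 < z τ₁ := by
    intro τ₁ hτ₁ hR
    set a := 2*r^2/μ with hadef
    have ha : 0 ≤ a := by positivity
    have haμ : μ * a = 2*r^2 := by rw [hadef]; field_simp
    have hmono : MonotoneOn (fun τ => z τ * Real.exp (a * τ)) (Icc s τ₁) := by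
      apply monotoneOn_of_deriv_nonneg (convex_Icc _ _)
      · exact (hzc.mul (Real.continuous_exp.comp (continuous_const.mul continuous_id))).continuousOn
      · intro x hx
        rw [interior_Icc] at hx
        have hx' : x ∈ Icc s t := ⟨hx.1.le, le_trans hx.2.le hτ₁.2⟩
        have hlin : HasDerivAt (fun τ : ℝ => a * τ) a x := by
          simpa using (hasDerivAt_id x).const_mul a
        exact (((hz' x hx').mul hlin.exp).differentiableAt).differentiableWithinAt
      · intro x hx
        rw [interior_Icc] at hx
        have hx' : x ∈ Icc s t := ⟨hx.1.le, le_trans hx.2.le hτ₁.2⟩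
        have hRx := hR x ⟨hx.1.le, hx.2.le⟩
        have hlin : HasDerivAt (fun τ : ℝ => a * τ) a x := by
          simpa using (hasDerivAt_id x).const_mul a
        have hd := (hz' x hx').mul hlin.exp
        rw [(show HasDerivAt (fun τ => z τ * Real.exp (a * τ)) _ x from hd).deriv]
        have hbx := hbge x hx'.1
        have hE : 0 < Real.exp (a * x) := Real.exp_pos _
        have hzx := hzu x
        have hy0 : 0 ≤ y x := by nlinarith [hRx.1, hRx.2, hbpos x hx'.1]
        have hby2z : b x * y x ≤ 2 * z x := by linarith [hRx.1, hRx.2, hzx]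
        have hkey : r^2 * y x ≤ a * z x := by
          have h8 : μ * (r^2 * y x) ≤ μ * (a * z x) := by
            nlinarith [mul_le_mul_of_nonneg_left hby2z (sq_nonneg r),
              mul_nonneg (mul_nonneg (sq_nonneg r) (sub_nonneg.2 hbx)) hy0, haμ]
          exact le_of_mul_le_mul_left h8 hμ
        nlinarith [hE, hkey]
    have h1 := hmono (left_mem_Icc.2 hτ₁.1) (right_mem_Icc.2 hτ₁.1) hτ₁.1
    simp only at h1
    rw [hzs] at h1
    have h2 : 0 < b s * Real.exp (a * s) := by positivity
    nlinarith [Real.exp_pos (a * τ₁), h1, h2]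
  -- slope lemmas
  have slope_pos : ∀ (f : ℝ → ℝ) (x d : ℝ), HasDerivAt f d x → f x = 0 → 0 < d →
      ∀ᶠ σ in 𝓝[>] x, 0 < f σ := by
    intro f x d hf hx hd
    have h1 : Tendsto (slope f x) (𝓝[>] x) (𝓝 d) :=
      (hasDerivAt_iff_tendsto_slope.1 hf).mono_left (nhdsWithin_mono x fun σ hσ => ne_of_gt hσ)
    have h2 : ∀ᶠ σ in 𝓝[>] x, 0 < slope f x σ := h1.eventually (eventually_gt_nhds hd)
    filter_upwards [h2, self_mem_nhdsWithin] with σ hσ hσ'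
    have hne : σ - x ≠ 0 := sub_ne_zero.2 (ne_of_gt hσ')
    have h3 : f σ - f x = slope f x σ * (σ - x) := by
      rw [slope_def_field, div_mul_cancel₀ _ hne]
    have h4 : 0 < σ - x := sub_pos.2 hσ'
    nlinarith [h3, hσ, h4]
  have slope_neg : ∀ (f : ℝ → ℝ) (x d : ℝ), HasDerivAt f d x → f x = 0 → d < 0 →
      ∀ᶠ σ in 𝓝[>] x, f σ < 0 := by
    intro f x d hf hx hd
    have h1 : Tendsto (slope f x) (𝓝[>] x) (𝓝 d) :=
      (hasDerivAt_iff_tendsto_slope.1 hf).mono_left (nhdsWithin_mono x fun σ hσ => ne_of_gt hσ)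
    have h2 : ∀ᶠ σ in 𝓝[>] x, slope f x σ < 0 := h1.eventually (eventually_lt_nhds hd)
    filter_upwards [h2, self_mem_nhdsWithin] with σ hσ hσ'
    have hne : σ - x ≠ 0 := sub_ne_zero.2 (ne_of_gt hσ')
    have h3 : f σ - f x = slope f x σ * (σ - x) := by
      rw [slope_def_field, div_mul_cancel₀ _ hne]
    have h4 : 0 < σ - x := sub_pos.2 hσ'
    nlinarith [h3, hσ, h4]
  -- main invariance
  have main : ∀ σ ∈ Icc s t, 0 ≤ u σ ∧ 2 * u σ ≤ b σ * y σ := by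
    set A : Set ℝ := {τ | τ ∈ Icc s t ∧ ∀ σ ∈ Icc s τ, 0 ≤ u σ ∧ 2 * u σ ≤ b σ * y σ} with hA
    have hsA : s ∈ A := by
      refine ⟨⟨le_rfl, hst⟩, ?_⟩
      intro σ hσ
      have hσs : σ = s := le_antisymm hσ.2 hσ.1
      subst hσs
      constructor
      · simp [hudef, hdys]
      · simp only [hudef, hdys, hys, neg_zero, mul_zero, mul_one]
        exact (hbpos σ le_rfl).le
    have hAne : A.Nonempty := ⟨s, hsA⟩
    have hAbdd : BddAbove A := ⟨t, fun x hx => hx.1.2⟩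
    set τ' := sSup A with hτ'def
    have hsτ' : s ≤ τ' := le_csSup hAbdd hsA
    have hτ't : τ' ≤ t := csSup_le hAne (fun x hx => hx.1.2)
    have hτ'I : τ' ∈ Icc s t := ⟨hsτ', hτ't⟩
    have hRlt : ∀ σ, s ≤ σ → σ < τ' → (0 ≤ u σ ∧ 2 * u σ ≤ b σ * y σ) := by
      intro σ h1 h2
      obtain ⟨τ₀, hτ₀A, hστ₀⟩ := exists_lt_of_lt_csSup hAne h2
      exact hτ₀A.2 σ ⟨h1, hστ₀.le⟩
    have hRτ' : 0 ≤ u τ' ∧ 2 * u τ' ≤ b τ' * y τ' := by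
      rcases eq_or_lt_of_le hsτ' with h | h
      · rw [← h]; exact hsA.2 s (left_mem_Icc.2 le_rfl)
      · constructor
        · have h1 : Tendsto u (𝓝[<] τ') (𝓝 (u τ')) :=
            (huc.continuousAt (x := τ')).continuousWithinAt.tendsto
          refine ge_of_tendsto h1 ?_
          filter_upwards [Ico_mem_nhdsLT_of_mem (Set.mem_Ioc.2 ⟨h, le_rfl⟩)] with σ hσ
          exact (hRlt σ hσ.1 hσ.2).1
        · have h1 : Tendsto (fun τ => b τ * y τ - 2 * u τ) (𝓝[<] τ') (𝓝 (b τ' * y τ' - 2 * u τ')) :=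
            (((hbc.mul hyc).sub (continuous_const.mul huc)).continuousAt (x := τ')).continuousWithinAt.tendsto
          have h2 : 0 ≤ b τ' * y τ' - 2 * u τ' := by
            refine ge_of_tendsto h1 ?_
            filter_upwards [Ico_mem_nhdsLT_of_mem (Set.mem_Ioc.2 ⟨h, le_rfl⟩)] with σ hσ
            linarith [(hRlt σ hσ.1 hσ.2).2]
          linarith
    have hRall : ∀ σ ∈ Icc s τ', 0 ≤ u σ ∧ 2 * u σ ≤ b σ * y σ := by
      intro σ hσ
      rcases lt_or_eq_of_le hσ.2 with h | h
      · exact hRlt σ hσ.1 h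
      · rw [h]; exact hRτ'
    have hzτ' : 0 < z τ' := key_zpos τ' hτ'I hRall
    rcases eq_or_lt_of_le hτ't with heq | hlt
    · rw [heq] at hRall; exact hRall
    · exfalso
      have hbτ' := hbpos τ' hsτ'
      have hbyτ' : b τ' * y τ' = z τ' + u τ' := by rw [hzu τ']; ring
      have hev : ∀ᶠ σ in 𝓝[>] τ', (0 ≤ u σ ∧ 2 * u σ ≤ b σ * y σ) := by
        rcases eq_or_lt_of_le hRτ'.1 with h0 | h0
        · -- u τ' = 0
          have huτ0 : u τ' = 0 := h0.symm
          have hyτ : 0 < y τ' := by nlinarith [hzτ']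
          have hdy0 : deriv y τ' = 0 := by
            have : u τ' = -deriv y τ' := rfl
            rw [huτ0] at this; linarith
          have hder := hu' τ' hτ'I
          rw [hdy0] at hder
          have hdpos : 0 < r^2 * y τ' + b τ' * 0 + (-lam * μ * (1+τ')^(-lam-1)) * y τ' := by
            have := hb'pos τ' hsτ'
            nlinarith [sq_nonneg r]
          have hev1 := slope_pos u τ' _ hder huτ0 hdpos
          have hev2 : ∀ᶠ σ in 𝓝[>] τ', 0 < b σ * y σ - 2 * u σ := by
            have hc : ContinuousAt (fun σ => b σ * y σ - 2 * u σ) τ' :=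
              ((hbc.mul hyc).sub (continuous_const.mul huc)).continuousAt
            have hval : 0 < b τ' * y τ' - 2 * u τ' := by rw [hbyτ', huτ0]; linarith
            exact (hc.tendsto.eventually (eventually_gt_nhds hval)).filter_mono nhdsWithin_le_nhds
          filter_upwards [hev1, hev2] with σ h1 h2
          exact ⟨h1.le, by linarith⟩
        · -- u τ' > 0
          rcases eq_or_lt_of_le hRτ'.2 with h1 | h1
          · -- 2u = by at τ'
            have huz : u τ' = z τ' := by nlinarith [h1, hbyτ']
            have hyv : b τ' * y τ' = 2 * z τ' := by rw [hbyτ', huz]; ring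
            have hdy : deriv y τ' = -z τ' := by
              have : u τ' = -deriv y τ' := rfl
              rw [huz] at this; linarith
            -- q = 2u - by
            have hderu := hu' τ' hτ'I
            have hderby := (hb' τ' hsτ').mul ((hy1 τ').hasDerivAt)
            have hderq := (hderu.const_mul 2).sub hderby
            have hqτ0 : (fun σ => 2 * u σ - b σ * y σ) τ' = 0 := by
              simp only; linarith [h1]
            have hdq : 2 * (r^2 * y τ' + b τ' * deriv y τ' + (-lam * μ * (1+τ')^(-lam-1)) * y τ')
                - (-lam * μ * (1+τ')^(-lam-1) * y τ' + b τ' * deriv y τ') < 0 := by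
              have hb8 := hb'le τ' hsτ'
              have hb'p := hb'pos τ' hsτ'
              have hr2 : r^2 ≤ μ^2/16 := by nlinarith
              have hμb := hbge τ' hsτ'
              have hyτpos : 0 < y τ' := by nlinarith [hzτ', hbτ']
              rw [hdy]
              have hexp : b τ' * (2 * (r ^ 2 * y τ' + b τ' * -z τ' + (-lam * μ * (1+τ')^(-lam-1)) * y τ')
                  - (-lam * μ * (1+τ')^(-lam-1) * y τ' + b τ' * -z τ'))
                  = z τ' * (4*r^2 + 2*(-lam * μ * (1+τ')^(-lam-1)) - b τ' * b τ') := by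
                linear_combination (2*r^2 + (-lam * μ * (1+τ')^(-lam-1))) * hyv
              have hsum : 4*r^2 + 2*(-lam * μ * (1+τ')^(-lam-1)) - b τ' * b τ' ≤ -(b τ' * b τ')/2 := by
                nlinarith [mul_le_mul hμb hμb hμ.le hbτ'.le, hb8, hr2]
              have hneg : z τ' * (4*r^2 + 2*(-lam * μ * (1+τ')^(-lam-1)) - b τ' * b τ') < 0 := by
                nlinarith [mul_pos hzτ' (mul_pos hbτ' hbτ'), mul_le_mul_of_nonneg_left hsum hzτ'.le]
              nlinarith [hbτ', hexp, hneg]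
            have hev1 := slope_neg (fun σ => 2 * u σ - b σ * y σ) τ' _ hderq hqτ0 hdq
            have hev2 : ∀ᶠ σ in 𝓝[>] τ', 0 < u σ := by
              have hc : ContinuousAt u τ' := huc.continuousAt
              exact (hc.tendsto.eventually (eventually_gt_nhds h0)).filter_mono nhdsWithin_le_nhds
            filter_upwards [hev1, hev2] with σ hh1 hh2
            exact ⟨hh2.le, by linarith [hh1]⟩
          · -- strict interior
            have hc1 : ContinuousAt u τ' := huc.continuousAt
            have hc2 : ContinuousAt (fun σ => b σ * y σ - 2 * u σ) τ' :=
              ((hbc.mul hyc).sub (continuous_const.mul huc)).continuousAt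
            have hev1 := (hc1.tendsto.eventually (eventually_gt_nhds h0)).filter_mono
              (nhdsWithin_le_nhds (s := Ioi τ'))
            have hval : 0 < b τ' * y τ' - 2 * u τ' := by linarith
            have hev2 := (hc2.tendsto.eventually (eventually_gt_nhds hval)).filter_mono
              (nhdsWithin_le_nhds (s := Ioi τ'))
            filter_upwards [hev1, hev2] with σ hh1 hh2
            exact ⟨hh1.le, by linarith⟩
      obtain ⟨c, hc, hsub⟩ := mem_nhdsGT_iff_exists_Ioc_subset.1 hev
      have hσ₁ : τ' < min c t := lt_min hc hlt
      have hσ₁A : min c t ∈ A := by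
        refine ⟨⟨le_trans hsτ' hσ₁.le, min_le_right _ _⟩, ?_⟩
        intro σ hσ
        rcases le_or_gt σ τ' with h | h
        · exact hRall σ ⟨hσ.1, h⟩
        · exact hsub ⟨h, le_trans hσ.2 (min_le_left _ _)⟩
      exact absurd (le_csSup hAbdd hσ₁A) (not_le.2 hσ₁)
  -- final estimate
  have hregt := main t ⟨hst, le_rfl⟩
  have hbt := hbpos t hst
  have hbs := hbpos s le_rfl
  set F : ℝ → ℝ := fun τ => ∫ σ in s..τ, (b σ)⁻¹ with hFdef
  have hbinvc : ContinuousOn (fun σ => (b σ)⁻¹) (Icc s t) :=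
    (hbc.continuousOn).inv₀ (fun x hx => ne_of_gt (hbpos x hx.1))
  have hF' : ∀ x ∈ Ioo s t, HasDerivAt F (b x)⁻¹ x := by
    intro x hx
    apply intervalIntegral.integral_hasDerivAt_right
    · apply ContinuousOn.intervalIntegrable
      apply hbinvc.mono
      rw [uIcc_of_le hx.1.le]
      exact Icc_subset_Icc le_rfl hx.2.le
    · exact (hbc.measurable.inv).stronglyMeasurable.stronglyMeasurableAtFilter
    · exact ContinuousAt.inv₀ hbc.continuousAt (ne_of_gt (hbpos x hx.1.le))
  have hFcont : ContinuousOn F (Icc s t) := by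
    have h1 : IntegrableOn (fun σ => (b σ)⁻¹) (uIcc s t) := by
      rw [uIcc_of_le hst]
      exact hbinvc.integrableOn_compact isCompact_Icc
    have := intervalIntegral.continuousOn_primitive_interval (f := fun σ => (b σ)⁻¹) h1
    rwa [uIcc_of_le hst] at this
  have hanti : AntitoneOn (fun τ => z τ * Real.exp (r^2 * F τ)) (Icc s t) := by
    apply antitoneOn_of_deriv_nonpos (convex_Icc _ _)
    · exact hzc.continuousOn.mul
        (Real.continuous_exp.comp_continuousOn (continuousOn_const.mul hFcont))
    · intro x hx
      rw [interior_Icc] at hx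
      exact (((hz' x ⟨hx.1.le, hx.2.le⟩).mul
        (((hF' x hx).const_mul (r^2)).exp)).differentiableAt).differentiableWithinAt
    · intro x hx
      rw [interior_Icc] at hx
      have hd := (hz' x ⟨hx.1.le, hx.2.le⟩).mul (((hF' x hx).const_mul (r^2)).exp)
      rw [(show HasDerivAt (fun τ => z τ * Real.exp (r^2 * F τ)) _ x from hd).deriv]
      have hbx := hbpos x hx.1.le
      have hbne : b x ≠ 0 := ne_of_gt hbx
      have hu0 : 0 ≤ u x := (main x ⟨hx.1.le, hx.2.le⟩).1
      have hv : -r ^ 2 * y x * Real.exp (r ^ 2 * F x)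
            + z x * (Real.exp (r ^ 2 * F x) * (r ^ 2 * (b x)⁻¹))
          = -(u x * Real.exp (r ^ 2 * F x) * r ^ 2 * (b x)⁻¹) := by
        rw [hzu x]; field_simp; ring
      rw [hv]
      exact neg_nonpos_of_nonneg (mul_nonneg (mul_nonneg
        (mul_nonneg hu0 (Real.exp_pos _).le) (sq_nonneg r)) (inv_nonneg.2 hbx.le))
  have hwt : z t * Real.exp (r^2 * F t) ≤ b s := by
    have h := hanti (left_mem_Icc.2 hst) (right_mem_Icc.2 hst) hst
    simp only at h
    have hFs : F s = 0 := by simp [hFdef]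
    rw [hFs] at h
    simpa [hzs] using h
  have hE := Real.exp_pos (r^2 * F t)
  have hzt_le : z t ≤ b s * Real.exp (-(r^2 * F t)) := by
    have h3 := mul_le_mul_of_nonneg_right hwt (inv_nonneg.2 hE.le)
    have h4 : z t * Real.exp (r^2*F t) * (Real.exp (r^2*F t))⁻¹ = z t := by field_simp
    rw [h4] at h3
    rw [Real.exp_neg]
    exact h3
  have hut := hregt.1
  have h2ut := hregt.2
  have hztu : z t = b t * y t - u t := hzu t
  have hby2z : b t * y t ≤ 2 * z t := by linarith
  have hyt0 : 0 ≤ y t := by nlinarith [hbt, hut, h2ut]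
  show |y t| ≤ 2 * (b s / b t) * Real.exp (-1 * r^2 * F t)
  rw [abs_of_nonneg hyt0]
  have e1 : -1 * r^2 * F t = -(r^2 * F t) := by ring
  rw [e1, show 2 * (b s / b t) * Real.exp (-(r^2 * F t))
    = 2 * (b s * Real.exp (-(r^2*F t))) / b t from by ring, le_div_iff₀ hbt]
  nlinarith [hby2z, hzt_le]
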